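/- Let G = (A, B, E) be a bipartite graph, let S* be an optimal semi-matching of G with maximal degree d*, and let d ≥ d* be an integer. Let S_1 ⊆ E be any maximal incomplete d-bounded semi-matching of G (no edge of E can be added keeping it an incomplete d-bounded semi-matching). Then |S_1| ≥ |A| · d/(d + d*). -/

import Mathlib

open Finset

variable {α β : Type*} [Fintype α] [Fintype β] [DecidableEq α] [DecidableEq β]

/-- Degree of a vertex `b ∈ B` with respect to an edge set `S`. -/
def degB (S : Finset (α × β)) (b : β) : ℕ := (S.filter fun e => e.2 = b).card

/-- Degree of a vertex `a ∈ A` with respect to an edge set `S`. -/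
def degA (S : Finset (α × β)) (a : α) : ℕ := (S.filter fun e => e.1 = a).card

/-- Maximal degree of a vertex with respect to an edge set `S`. -/
def maxDeg (S : Finset (α × β)) : ℕ :=
  max (Finset.univ.sup (degA S)) (Finset.univ.sup (degB S))

/-- `S` is a semi-matching of `A'` into `B` using edges of `E`. -/
def IsSemi (A' : Finset α) (E S : Finset (α × β)) : Prop :=
  S ⊆ E ∧ (∀ e ∈ S, e.1 ∈ A') ∧ ∀ a ∈ A', degA S a = 1

/-- An optimal semi-matching of `A'` into `B` using edges of `E`:
a semi-matching minimizing the maximal degree. -/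
def IsOptSemi (A' : Finset α) (E S : Finset (α × β)) : Prop :=
  IsSemi A' E S ∧ ∀ T, IsSemi A' E T → maxDeg S ≤ maxDeg T

/-- Neighborhood of a set `X ⊆ A` of vertices with respect to an edge set `E`. -/
def nbr (E : Finset (α × β)) (X : Finset α) : Finset β :=
  Finset.univ.filter fun b => ∃ a ∈ X, (a, b) ∈ E


/-- An incomplete `d`-bounded semi-matching of `G`: every `A`-degree is at most `1` and
every `B`-degree is at most `d`. -/
def IsIncompleteSemi (d : ℕ) (E S : Finset (α × β)) : Prop :=
  S ⊆ E ∧ (∀ a : α, degA S a ≤ 1) ∧ ∀ b : β, degB S b ≤ d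

lemma sum_degA (S : Finset (α × β)) : ∑ a, degA S a = S.card :=
  (Finset.card_eq_sum_card_fiberwise (fun e _ => Finset.mem_univ e.1)).symm

lemma sum_degB (S : Finset (α × β)) : ∑ b, degB S b = S.card :=
  (Finset.card_eq_sum_card_fiberwise (fun e _ => Finset.mem_univ e.2)).symm

lemma degB_le_maxDeg (S : Finset (α × β)) (b : β) : degB S b ≤ maxDeg S :=
  le_max_of_le_right (Finset.le_sup (Finset.mem_univ b))

/-- Any maximal incomplete `d`-bounded semi-matching `S₁` of `G`, with `d ≥ d*` for `d*`
the optimal semi-matching degree, satisfies `|S₁| ≥ |A| · d/(d + d*)`. -/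
theorem maximal_incomplete_semi_size (E Sstar S1 : Finset (α × β)) (d : ℕ)
    (hSstar : IsOptSemi Finset.univ E Sstar) (hd : maxDeg Sstar ≤ d)
    (h1 : IsIncompleteSemi d E S1)
    (hmax : ∀ e ∈ E, e ∉ S1 → ¬ IsIncompleteSemi d E (insert e S1)) :
    (Fintype.card α : ℝ) * d / (d + maxDeg Sstar) ≤ (S1.card : ℝ) := by

  set t := maxDeg Sstar with ht
  by_cases hA : Fintype.card α = 0
  · rw [hA]; simp
  obtain ⟨⟨hsub, hsA, hsdeg⟩, _⟩ := hSstar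
  have hd1 : 1 ≤ d := by
    obtain ⟨a⟩ := Fintype.card_pos_iff.mp (Nat.pos_of_ne_zero hA)
    have h1t : 1 ≤ t := by
      rw [← hsdeg a (Finset.mem_univ a)]
      exact le_max_of_le_left (Finset.le_sup (Finset.mem_univ a))
    omega
  set U := Finset.univ.filter (fun a => degA S1 a = 0) with hUdef
  set F := Finset.univ.filter (fun b => degB S1 b = d) with hFdef
  -- key claim
  have key : ∀ e ∈ Sstar, degA S1 e.1 = 0 → degB S1 e.2 = d := by
    intro e he h0
    have heE : e ∈ E := hsub he
    have henot : e ∉ S1 := by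
      intro h
      have : 1 ≤ degA S1 e.1 :=
        Finset.card_pos.mpr ⟨e, Finset.mem_filter.mpr ⟨h, rfl⟩⟩
      omega
    by_contra hb
    have hlt : degB S1 e.2 < d := lt_of_le_of_ne (h1.2.2 e.2) hb
    apply hmax e heE henot
    refine ⟨Finset.insert_subset heE h1.1, ?_, ?_⟩
    · intro a
      unfold degA
      rw [Finset.filter_insert]
      by_cases hae : e.1 = a
      · rw [if_pos hae]
        have : (S1.filter fun x => x.1 = a).card = 0 := by
          rw [← hae]; exact h0
        calc (insert e (S1.filter fun x => x.1 = a)).card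
            ≤ (S1.filter fun x => x.1 = a).card + 1 := Finset.card_insert_le _ _
          _ ≤ 1 := by omega
      · rw [if_neg hae]; exact h1.2.1 a
    · intro b
      unfold degB
      rw [Finset.filter_insert]
      by_cases hbe : e.2 = b
      · rw [if_pos hbe]
        have : (S1.filter fun x => x.2 = b).card < d := by rw [← hbe]; exact hlt
        calc (insert e (S1.filter fun x => x.2 = b)).card
            ≤ (S1.filter fun x => x.2 = b).card + 1 := Finset.card_insert_le _ _
          _ ≤ d := by omega
      · rw [if_neg hbe]; exact h1.2.2 b
  -- |U| + |S1| = |A|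
  have hUcard : U.card + S1.card = Fintype.card α := by
    have hsplit := Finset.card_filter_add_card_filter_not
      (s := Finset.univ) (p := fun a => degA S1 a = 0)
    have hne : (Finset.univ.filter fun a => ¬ degA S1 a = 0).card = S1.card := by
      rw [← sum_degA S1, Finset.card_filter]
      refine Finset.sum_congr rfl fun a _ => ?_
      have := h1.2.1 a
      by_cases h : degA S1 a = 0
      · simp [h]
      · simp [h]; omega
    rw [Finset.card_univ, ← hUdef] at hsplit
    omega
  -- |U| ≤ t * |F|
  have hUle : U.card ≤ t * F.card := by
    set T := Sstar.filter (fun e => degA S1 e.1 = 0) with hTdef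
    have hT1 : T.card = U.card := by
      rw [Finset.card_eq_sum_card_fiberwise
        (f := fun e : α × β => e.1) (t := U)
        (fun e he => Finset.mem_filter.mpr
          ⟨Finset.mem_univ _, (Finset.mem_filter.mp he).2⟩)]
      rw [Finset.card_eq_sum_ones U]
      refine Finset.sum_congr rfl fun a ha => ?_
      have haU : degA S1 a = 0 := (Finset.mem_filter.mp ha).2
      have : T.filter (fun e => e.1 = a) = Sstar.filter (fun e => e.1 = a) := by
        ext e
        simp only [hTdef, Finset.mem_filter, and_assoc]
        constructor
        · rintro ⟨h1, _, h3⟩; exact ⟨h1, h3⟩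
        · rintro ⟨h1, h3⟩; exact ⟨h1, h3 ▸ haU, h3⟩
      rw [this]
      exact hsdeg a (Finset.mem_univ a)
    have hT2 : T ⊆ Sstar.filter (fun e => e.2 ∈ F) := by
      intro e he
      obtain ⟨h1, h2⟩ := Finset.mem_filter.mp he
      exact Finset.mem_filter.mpr ⟨h1,
        Finset.mem_filter.mpr ⟨Finset.mem_univ _, key e h1 h2⟩⟩
    have hT3 : (Sstar.filter (fun e => e.2 ∈ F)).card ≤ t * F.card := by
      rw [Finset.card_eq_sum_card_fiberwise
        (s := Sstar.filter (fun e => e.2 ∈ F)) (f := fun e : α × β => e.2) (t := F)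
        (fun e he => (Finset.mem_filter.mp he).2)]
      calc ∑ b ∈ F, ((Sstar.filter fun e => e.2 ∈ F).filter fun e => e.2 = b).card
          ≤ ∑ b ∈ F, t := by
            refine Finset.sum_le_sum fun b hb => ?_
            calc ((Sstar.filter fun e => e.2 ∈ F).filter fun e => e.2 = b).card
                ≤ (Sstar.filter fun e => e.2 = b).card :=
                  Finset.card_le_card (by
                    intro e he
                    obtain ⟨he1, he2⟩ := Finset.mem_filter.mp he
                    exact Finset.mem_filter.mpr ⟨(Finset.mem_filter.mp he1).1, he2⟩)
              _ ≤ t := degB_le_maxDeg Sstar b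
        _ = t * F.card := by rw [Finset.sum_const, smul_eq_mul, mul_comm]
    calc U.card = T.card := hT1.symm
      _ ≤ (Sstar.filter (fun e => e.2 ∈ F)).card := Finset.card_le_card hT2
      _ ≤ t * F.card := hT3
  -- |F| * d ≤ |S1|
  have hFle : F.card * d ≤ S1.card := by
    calc F.card * d = ∑ b ∈ F, d := by rw [Finset.sum_const, smul_eq_mul]
      _ = ∑ b ∈ F, degB S1 b :=
          Finset.sum_congr rfl fun b hb => ((Finset.mem_filter.mp hb).2).symm
      _ ≤ ∑ b, degB S1 b :=
          Finset.sum_le_sum_of_subset (Finset.subset_univ F)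
      _ = S1.card := sum_degB S1
  -- combine in ℕ
  have hnat : Fintype.card α * d ≤ S1.card * (d + t) := by
    calc Fintype.card α * d = U.card * d + S1.card * d := by
          rw [← hUcard]; ring
      _ ≤ t * F.card * d + S1.card * d := by
          exact Nat.add_le_add_right (Nat.mul_le_mul_right d hUle) _
      _ = t * (F.card * d) + S1.card * d := by ring
      _ ≤ t * S1.card + S1.card * d := by
          exact Nat.add_le_add_right (Nat.mul_le_mul_left t hFle) _
      _ = S1.card * (d + t) := by ring
  have hpos : (0:ℝ) < (d:ℝ) + (t:ℝ) := by
    have : (1:ℝ) ≤ (d:ℝ) := by exact_mod_cast hd1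
    have := Nat.cast_nonneg (α := ℝ) t
    linarith
  rw [div_le_iff₀ hpos]
  exact_mod_cast hnat
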